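/- For a Horn PCL formula p with no standard implications (only conjunctions of atoms and contractual implications ↠ with atomic conclusions): p ⊢ λ(p) is derivable if and only if the contract automaton ⟦p⟧ admits weak agreement, where λ(p) is the conjunction of all atoms occurring in p. -/

import Mathlib

/-- Formulae of Propositional Contract Logic: atoms, ⊥, ⊤, ¬, ∧, ∨, →, and the
contractual implication ↠ (`cimp`). -/
inductive PCLForm where
  | atom : ℕ → PCLForm
  | bot : PCLForm
  | top : PCLForm
  | neg : PCLForm → PCLForm
  | conj : PCLForm → PCLForm → PCLForm
  | disj : PCLForm → PCLForm → PCLForm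
  | imp : PCLForm → PCLForm → PCLForm
  | cimp : PCLForm → PCLForm → PCLForm
deriving DecidableEq

/-- Cut-free (and weakR-free) sequent calculus for PCL over multiset contexts:
the standard intuitionistic rules plus Zero, Fix, PrePost for ↠. -/
inductive Der : Multiset PCLForm → PCLForm → Prop where
  | id (Γ p) : Der (p ::ₘ Γ) p
  | andL1 {Γ p q c} : Der (p ::ₘ (PCLForm.conj p q) ::ₘ Γ) c →
      Der ((PCLForm.conj p q) ::ₘ Γ) c
  | andL2 {Γ p q c} : Der (q ::ₘ (PCLForm.conj p q) ::ₘ Γ) c →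
      Der ((PCLForm.conj p q) ::ₘ Γ) c
  | andR {Γ p q} : Der Γ p → Der Γ q → Der Γ (PCLForm.conj p q)
  | orL {Γ p q c} : Der (p ::ₘ (PCLForm.disj p q) ::ₘ Γ) c →
      Der (q ::ₘ (PCLForm.disj p q) ::ₘ Γ) c → Der ((PCLForm.disj p q) ::ₘ Γ) c
  | orR1 {Γ p q} : Der Γ p → Der Γ (PCLForm.disj p q)
  | orR2 {Γ p q} : Der Γ q → Der Γ (PCLForm.disj p q)
  | impL {Γ p q c} : Der ((PCLForm.imp p q) ::ₘ Γ) p →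
      Der (q ::ₘ (PCLForm.imp p q) ::ₘ Γ) c → Der ((PCLForm.imp p q) ::ₘ Γ) c
  | impR {Γ p q} : Der (p ::ₘ Γ) q → Der Γ (PCLForm.imp p q)
  | negL {Γ p c} : Der ((PCLForm.neg p) ::ₘ Γ) p → Der ((PCLForm.neg p) ::ₘ Γ) c
  | negR {Γ p} : Der (p ::ₘ Γ) PCLForm.bot → Der Γ (PCLForm.neg p)
  | botL (Γ p) : Der (PCLForm.bot ::ₘ Γ) p
  | topR (Γ) : Der Γ PCLForm.top
  | zero {Γ p q} : Der Γ q → Der Γ (PCLForm.cimp p q)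
  | fix {Γ p q c} : Der (c ::ₘ (PCLForm.cimp p q) ::ₘ Γ) p →
      Der (q ::ₘ (PCLForm.cimp p q) ::ₘ Γ) c → Der ((PCLForm.cimp p q) ::ₘ Γ) c
  | prepost {Γ p q a b} : Der (a ::ₘ (PCLForm.cimp p q) ::ₘ Γ) p →
      Der (q ::ₘ (PCLForm.cimp p q) ::ₘ Γ) b →
      Der ((PCLForm.cimp p q) ::ₘ Γ) (PCLForm.cimp a b)

/-- Clauses of Horn PCL without standard implication: either a (nonempty)
conjunction of atoms, or a contractual implication `(⋀_{j∈J} a_j) ↠ b`. -/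
inductive HClause where
  | conj : List ℕ → HClause
  | cimp : List ℕ → ℕ → HClause
deriving DecidableEq

def atomsOfClause : HClause → List ℕ
  | .conj xs => xs
  | .cimp ys b => ys ++ [b]

/-- The conjunction of a list of atoms (right-associated). -/
def conjAtoms : List ℕ → PCLForm
  | [] => .top
  | [a] => .atom a
  | a :: as => .conj (.atom a) (conjAtoms as)

/-- The PCL formula denoted by a clause. -/
def clauseForm : HClause → PCLForm
  | .conj xs => conjAtoms xs
  | .cimp ys b => .cimp (conjAtoms ys) (.atom b)

/-- The conjunction of a list of formulae (right-associated). -/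
def conjForms : List PCLForm → PCLForm
  | [] => .top
  | [f] => f
  | f :: fs => .conj f (conjForms fs)

/-- The PCL formula `p = ⋀_{i∈I} α_i` denoted by a list of clauses. -/
def hpclForm (p : List HClause) : PCLForm := conjForms (p.map clauseForm)

/-- `λ(p)`: the conjunction of all the atoms occurring in `p`. -/
def lambdaOf (p : List HClause) : PCLForm :=
  conjAtoms (p.flatMap atomsOfClause).dedup

/-- Well-formedness of a clause: the atoms are nonempty and pairwise distinct,
and the conclusion of a contractual implication differs from its premises. -/
def WFClause : HClause → Prop
  | .conj xs => xs ≠ [] ∧ xs.Nodup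
  | .cimp ys b => ys ≠ [] ∧ ys.Nodup ∧ b ∉ ys

/-- The number of requests on atom `a` that the `i`-th clause automaton fires
in any of its accepted traces: a conjunction fires none; the automaton of a
contractual implication consumes each premise exactly once. -/
def reqCount (p : List HClause) (i : Fin p.length) (a : ℕ) : ℕ :=
  match p.get i with
  | .conj _ => 0
  | .cimp ys _ => ys.count a

/-- Whether the `i`-th clause automaton can fire an offer on atom `a`: a
conjunction offers each of its atoms (any number of times), while a
contractual implication offers only its conclusion (at any state, any number
of times). -/
def CanOffer : HClause → ℕ → Prop
  | .conj xs, a => a ∈ xs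
  | .cimp _ b, a => a = b

/-- The composed contract automaton `⟦p⟧` admits weak agreement: some accepted
trace has, for every atom, at least as many offers as requests.  Accepted
traces are interleavings (with matches, which preserve the counts) of accepted
traces of the clause automata, so this amounts to choosing, for each clause, a
number `off i a` of offers on each atom `a` it can offer, such that the total
offers of each atom dominate its total requests. -/
def AdmitsWeakAgreement (p : List HClause) : Prop :=
  ∃ off : Fin p.length → ℕ → ℕ,
    (∀ i a, off i a ≠ 0 → CanOffer (p.get i) a) ∧
    ∀ a : ℕ, (∑ i : Fin p.length, reqCount p i a) ≤ ∑ i : Fin p.length, off i a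

/-! ### Auxiliary development -/

/-- Truth-table semantics sound for the whole calculus, interpreting `p ↠ q` as `q`. -/
def evalPCL (v : ℕ → Prop) : PCLForm → Prop
  | .atom a => v a
  | .bot => False
  | .top => True
  | .neg q => ¬ evalPCL v q
  | .conj q r => evalPCL v q ∧ evalPCL v r
  | .disj q r => evalPCL v q ∨ evalPCL v r
  | .imp q r => evalPCL v q → evalPCL v r
  | .cimp _ r => evalPCL v r

theorem der_sound {Γ : Multiset PCLForm} {c : PCLForm} (h : Der Γ c) (v : ℕ → Prop)
    (hΓ : ∀ g ∈ Γ, evalPCL v g) : evalPCL v c := by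
  induction h with
  | id Γ p => exact hΓ p (Multiset.mem_cons_self p Γ)
  | andL1 h ih =>
    refine ih fun g hg => ?_
    rcases Multiset.mem_cons.mp hg with rfl | hg
    · exact (hΓ _ (Multiset.mem_cons_self _ _)).1
    · exact hΓ g hg
  | andL2 h ih =>
    refine ih fun g hg => ?_
    rcases Multiset.mem_cons.mp hg with rfl | hg
    · exact (hΓ _ (Multiset.mem_cons_self _ _)).2
    · exact hΓ g hg
  | andR h1 h2 ih1 ih2 => exact ⟨ih1 hΓ, ih2 hΓ⟩
  | orL h1 h2 ih1 ih2 =>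
    rcases hΓ _ (Multiset.mem_cons_self _ _) with hp | hq
    · refine ih1 fun g hg => ?_
      rcases Multiset.mem_cons.mp hg with rfl | hg
      · exact hp
      · exact hΓ g hg
    · refine ih2 fun g hg => ?_
      rcases Multiset.mem_cons.mp hg with rfl | hg
      · exact hq
      · exact hΓ g hg
  | orR1 h ih => exact Or.inl (ih hΓ)
  | orR2 h ih => exact Or.inr (ih hΓ)
  | impL h1 h2 ih1 ih2 =>
    have hp := ih1 hΓ
    have hq := hΓ _ (Multiset.mem_cons_self _ _) hp
    refine ih2 fun g hg => ?_
    rcases Multiset.mem_cons.mp hg with rfl | hg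
    · exact hq
    · exact hΓ g hg
  | impR h ih =>
    intro hp
    refine ih fun g hg => ?_
    rcases Multiset.mem_cons.mp hg with rfl | hg
    · exact hp
    · exact hΓ g hg
  | negL h ih => exact ((hΓ _ (Multiset.mem_cons_self _ _)) (ih hΓ)).elim
  | negR h ih =>
    intro hp
    refine ih fun g hg => ?_
    rcases Multiset.mem_cons.mp hg with rfl | hg
    · exact hp
    · exact hΓ g hg
  | botL Γ p => exact (hΓ _ (Multiset.mem_cons_self _ _)).elim
  | topR Γ => trivial
  | zero h ih => exact ih hΓ
  | fix h1 h2 ih1 ih2 =>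
    have hq := hΓ _ (Multiset.mem_cons_self _ _)
    refine ih2 fun g hg => ?_
    rcases Multiset.mem_cons.mp hg with rfl | hg
    · exact hq
    · exact hΓ g hg
  | prepost h1 h2 ih1 ih2 =>
    have hq := hΓ _ (Multiset.mem_cons_self _ _)
    refine ih2 fun g hg => ?_
    rcases Multiset.mem_cons.mp hg with rfl | hg
    · exact hq
    · exact hΓ g hg

theorem Der.weaken {Γ : Multiset PCLForm} {c : PCLForm} (h : Der Γ c)
    (Δ : Multiset PCLForm) : Der (Δ + Γ) c := by
  induction h with
  | id Γ p => rw [Multiset.add_cons]; exact Der.id _ _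
  | andL1 h ih => rw [Multiset.add_cons]; exact Der.andL1 (by simpa [Multiset.add_cons] using ih)
  | andL2 h ih => rw [Multiset.add_cons]; exact Der.andL2 (by simpa [Multiset.add_cons] using ih)
  | andR h1 h2 ih1 ih2 => exact Der.andR ih1 ih2
  | orL h1 h2 ih1 ih2 =>
    rw [Multiset.add_cons]
    exact Der.orL (by simpa [Multiset.add_cons] using ih1) (by simpa [Multiset.add_cons] using ih2)
  | orR1 h ih => exact Der.orR1 ih
  | orR2 h ih => exact Der.orR2 ih
  | impL h1 h2 ih1 ih2 =>
    rw [Multiset.add_cons]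
    exact Der.impL (by simpa [Multiset.add_cons] using ih1) (by simpa [Multiset.add_cons] using ih2)
  | impR h ih => exact Der.impR (by simpa [Multiset.add_cons] using ih)
  | negL h ih =>
    rw [Multiset.add_cons]
    exact Der.negL (by simpa [Multiset.add_cons] using ih)
  | negR h ih => exact Der.negR (by simpa [Multiset.add_cons] using ih)
  | botL Γ p => rw [Multiset.add_cons]; exact Der.botL _ _
  | topR Γ => exact Der.topR _
  | zero h ih => exact Der.zero ih
  | fix h1 h2 ih1 ih2 =>
    rw [Multiset.add_cons]
    exact Der.fix (by simpa [Multiset.add_cons] using ih1) (by simpa [Multiset.add_cons] using ih2)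
  | prepost h1 h2 ih1 ih2 =>
    rw [Multiset.add_cons]
    exact Der.prepost (by simpa [Multiset.add_cons] using ih1)
      (by simpa [Multiset.add_cons] using ih2)

theorem Der.mono {Γ Γ' : Multiset PCLForm} {c : PCLForm} (h : Der Γ c) (hle : Γ ≤ Γ') :
    Der Γ' c := by
  obtain ⟨Δ, rfl⟩ := Multiset.le_iff_exists_add.mp hle
  rw [add_comm]; exact h.weaken Δ

theorem der_of_mem {Γ : Multiset PCLForm} {f : PCLForm} (h : f ∈ Γ) : Der Γ f := by
  rw [← Multiset.cons_erase h]; exact Der.id _ _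

theorem der_unpack : ∀ (L : List PCLForm) (Γ : Multiset PCLForm) {c : PCLForm},
    Der (↑L + Γ) c → Der (conjForms L ::ₘ Γ) c
  | [], Γ, c, h => by
    have : Der Γ c := by simpa using h
    exact this.mono (Multiset.le_cons_self _ _)
  | [f], Γ, c, h => by
    simpa [conjForms] using h
  | f :: g :: fs, Γ, c, h => by
    show Der (PCLForm.conj f (conjForms (g :: fs)) ::ₘ Γ) c
    apply Der.andL1
    rw [Multiset.cons_swap]
    apply Der.andL2
    apply der_unpack (g :: fs)
    have h2 := h.weaken {PCLForm.conj f (conjForms (g :: fs))}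
    refine h2.mono (le_of_eq ?_)
    simp only [← Multiset.cons_coe, ← Multiset.singleton_add, ← Multiset.cons_coe,
      Multiset.add_cons, Multiset.cons_add]
    abel

theorem conjAtoms_eq : ∀ (xs : List ℕ), conjAtoms xs = conjForms (xs.map .atom)
  | [] => rfl
  | [_] => rfl
  | a :: b :: rest => by
    show PCLForm.conj _ (conjAtoms (b :: rest)) = PCLForm.conj _ (conjForms ((b :: rest).map .atom))
    rw [conjAtoms_eq (b :: rest)]

theorem der_conjAtoms_intro : ∀ (xs : List ℕ) {Γ : Multiset PCLForm},
    (∀ a ∈ xs, Der Γ (.atom a)) → Der Γ (conjAtoms xs)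
  | [], _, _ => Der.topR _
  | [a], _, h => h a (by simp)
  | a :: b :: rest, Γ, h =>
    Der.andR (h a (by simp))
      (der_conjAtoms_intro (b :: rest) fun x hx => h x (List.mem_cons_of_mem _ hx))

theorem eval_conjAtoms_intro (v : ℕ → Prop) :
    ∀ (xs : List ℕ), (∀ x ∈ xs, v x) → evalPCL v (conjAtoms xs)
  | [], _ => trivial
  | [a], h => h a (by simp)
  | a :: b :: rest, h =>
    ⟨h a (by simp), eval_conjAtoms_intro v (b :: rest) fun x hx => h x (List.mem_cons_of_mem _ hx)⟩

theorem eval_conjAtoms_mem (v : ℕ → Prop) :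
    ∀ (xs : List ℕ), evalPCL v (conjAtoms xs) → ∀ x ∈ xs, v x
  | [], _, x, hx => by simp at hx
  | [a], h, x, hx => by rcases (by simpa using hx : x = a) with rfl; exact h
  | a :: b :: rest, h, x, hx => by
    rcases List.mem_cons.mp hx with rfl | hx
    · exact h.1
    · exact eval_conjAtoms_mem v (b :: rest) h.2 x hx

theorem eval_conjForms_intro (v : ℕ → Prop) :
    ∀ (L : List PCLForm), (∀ f ∈ L, evalPCL v f) → evalPCL v (conjForms L)
  | [], _ => trivial
  | [f], h => h f (by simp)
  | f :: g :: fs, h =>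
    ⟨h f (by simp), eval_conjForms_intro v (g :: fs) fun x hx => h x (List.mem_cons_of_mem _ hx)⟩

/-- The combinatorial condition: every requested atom is offered by some clause. -/
def Cond (p : List HClause) : Prop :=
  ∀ a cl, cl ∈ p → (∃ ys b, cl = HClause.cimp ys b ∧ a ∈ ys) → ∃ cl' ∈ p, CanOffer cl' a

theorem der_atom_core (p : List HClause) (hC : Cond p) :
    ∀ (n : ℕ) (T : Finset ℕ) (Δ : Multiset PCLForm) (a : ℕ),
      ((p.flatMap atomsOfClause).toFinset \ T).card ≤ n →
      (∃ cl ∈ p, CanOffer cl a) →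
      (∀ t ∈ T, PCLForm.atom t ∈ Δ) →
      (↑(p.map clauseForm) : Multiset PCLForm) ≤ Δ →
      Der Δ (.atom a) := by
  intro n
  induction n with
  | zero =>
    intro T Δ a hcard hoff hT _
    -- a is in the atoms of p
    have hamem : a ∈ (p.flatMap atomsOfClause).toFinset := by
      obtain ⟨cl, hcl, hco⟩ := hoff
      rcases cl with xs | ⟨ys, b⟩
      · exact List.mem_toFinset.mpr (List.mem_flatMap.mpr ⟨_, hcl, hco⟩)
      · rcases (hco : a = b) with rfl
        exact List.mem_toFinset.mpr
          (List.mem_flatMap.mpr ⟨_, hcl, by simp [atomsOfClause]⟩)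
    have hempty : (p.flatMap atomsOfClause).toFinset \ T = ∅ :=
      Finset.card_eq_zero.mp (Nat.le_zero.mp hcard)
    have haT : a ∈ T := by
      by_contra haT
      exact absurd (Finset.mem_sdiff.mpr ⟨hamem, haT⟩) (by simp [hempty])
    exact der_of_mem (hT a haT)
  | succ n ih =>
    intro T Δ a hcard hoff hT hle
    by_cases haT : a ∈ T
    · exact der_of_mem (hT a haT)
    obtain ⟨cl, hcl, hco⟩ := hoff
    rcases hclE : cl with xs | ⟨ys, b⟩
    · -- conj clause offering a
      subst hclE
      have hF : conjAtoms xs ∈ Δ := by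
        refine Multiset.mem_of_le hle ?_
        rw [Multiset.mem_coe]
        exact List.mem_map.mpr ⟨_, hcl, rfl⟩
      rw [← Multiset.cons_erase hF, conjAtoms_eq]
      apply der_unpack
      apply der_of_mem
      rw [Multiset.mem_add, Multiset.mem_coe]
      exact Or.inl (List.mem_map.mpr ⟨a, hco, rfl⟩)
    · -- cimp clause: a = b
      subst hclE
      rcases (hco : a = b) with rfl
      have hF : PCLForm.cimp (conjAtoms ys) (.atom a) ∈ Δ := by
        refine Multiset.mem_of_le hle ?_
        rw [Multiset.mem_coe]
        exact List.mem_map.mpr ⟨_, hcl, rfl⟩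
      rw [← Multiset.cons_erase hF]
      apply Der.fix
      · -- premises
        rw [Multiset.cons_erase hF]
        apply der_conjAtoms_intro
        intro y hy
        have hyoff : ∃ cl' ∈ p, CanOffer cl' y := hC y _ hcl ⟨ys, a, rfl, hy⟩
        apply ih (insert a T) (PCLForm.atom a ::ₘ Δ) y _ hyoff
        · intro t ht
          rcases Finset.mem_insert.mp ht with rfl | ht
          · exact Multiset.mem_cons_self _ _
          · exact Multiset.mem_cons_of_mem (hT t ht)
        · exact hle.trans (Multiset.le_cons_self _ _)
        · -- cardinality decreases
          have hamem : a ∈ (p.flatMap atomsOfClause).toFinset :=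
            List.mem_toFinset.mpr
              (List.mem_flatMap.mpr ⟨_, hcl, by simp [atomsOfClause]⟩)
          have hmem : a ∈ (p.flatMap atomsOfClause).toFinset \ T :=
            Finset.mem_sdiff.mpr ⟨hamem, haT⟩
          rw [Finset.sdiff_insert, Finset.card_erase_of_mem hmem]
          omega
      · rw [Multiset.cons_erase hF]
        exact Der.id _ _

theorem cond_of_wa (p : List HClause) (h : AdmitsWeakAgreement p) : Cond p := by
  obtain ⟨off, hoff, hsum⟩ := h
  intro a cl hcl hreq
  obtain ⟨ys, b, rfl, hy⟩ := hreq
  obtain ⟨i, hi⟩ := List.mem_iff_get.mp hcl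
  have hreqi : 0 < reqCount p i a := by
    simp only [reqCount, hi]
    exact List.count_pos_iff.mpr hy
  have h1 : 0 < ∑ i : Fin p.length, reqCount p i a :=
    lt_of_lt_of_le hreqi (Finset.single_le_sum (f := fun k : Fin p.length => reqCount p k a)
      (fun _ _ => Nat.zero_le _) (Finset.mem_univ i))
  have h2 : 0 < ∑ i : Fin p.length, off i a := lt_of_lt_of_le h1 (hsum a)
  have hex : ∃ j : Fin p.length, off j a ≠ 0 := by
    by_contra hno
    push_neg at hno
    simp [Finset.sum_eq_zero fun j _ => hno j] at h2
  obtain ⟨j, hj⟩ := hex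
  exact ⟨p.get j, List.get_mem p j, hoff j a hj⟩

theorem wa_of_cond (p : List HClause) (h : Cond p) : AdmitsWeakAgreement p := by
  classical
  refine ⟨fun i a => if CanOffer (p.get i) a then (∑ j : Fin p.length, reqCount p j a) else 0,
    ?_, ?_⟩
  · intro i a hne
    by_contra hc
    have hne' : (if CanOffer (p.get i) a then ∑ j : Fin p.length, reqCount p j a else 0) ≠ 0 := hne
    rw [if_neg hc] at hne'
    exact hne' rfl
  · intro a
    by_cases hz : (∑ j : Fin p.length, reqCount p j a) = 0
    · simp [hz]
    · have hex : ∃ i : Fin p.length, reqCount p i a ≠ 0 := by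
        by_contra hno
        push_neg at hno
        exact hz (Finset.sum_eq_zero fun j _ => hno j)
      obtain ⟨i, hi⟩ := hex
      have hreq : ∃ ys b, p.get i = HClause.cimp ys b ∧ a ∈ ys := by
        rcases hgi : p.get i with xs | ⟨ys, b⟩
        · exfalso
          apply hi
          unfold reqCount
          rw [hgi]
        · refine ⟨ys, b, rfl, ?_⟩
          have hi' : ys.count a ≠ 0 := by
            unfold reqCount at hi
            rw [hgi] at hi
            exact hi
          exact List.count_pos_iff.mp (Nat.pos_of_ne_zero hi')
      obtain ⟨cl', hcl', hco'⟩ := h a (p.get i) (List.get_mem p i) hreq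
      obtain ⟨j, hj⟩ := List.mem_iff_get.mp hcl'
      have hle := Finset.single_le_sum (f := fun k : Fin p.length =>
          if CanOffer (p.get k) a then ∑ m : Fin p.length, reqCount p m a else 0)
        (fun _ _ => Nat.zero_le _) (Finset.mem_univ j)
      rw [if_pos (hj ▸ hco')] at hle
      simpa using hle

/-- For a Horn PCL formula `p` with no standard implications, `p ⊢ λ(p)` is
derivable in (cut-free) PCL if and only if the contract automaton `⟦p⟧`
admits weak agreement. -/
theorem hpcl_provable_iff_weak_agreement (p : List HClause)
    (hlen : 2 ≤ p.length) (hwf : ∀ c ∈ p, WFClause c) :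
    Der {hpclForm p} (lambdaOf p) ↔ AdmitsWeakAgreement p := by
  constructor
  · intro hder
    apply wa_of_cond
    intro a cl hcl hreq
    obtain ⟨ys, b, rfl, hy⟩ := hreq
    by_contra hno
    push_neg at hno
    set v : ℕ → Prop := fun x => x ≠ a with hv
    have hctx : evalPCL v (hpclForm p) := by
      unfold hpclForm
      apply eval_conjForms_intro
      intro f hf
      obtain ⟨cl', hcl', rfl⟩ := List.mem_map.mp hf
      rcases cl' with xs | ⟨ys', b'⟩
      · show evalPCL v (conjAtoms xs)
        apply eval_conjAtoms_intro
        intro x hx hxa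
        subst hxa
        exact hno _ hcl' hx
      · show v b'
        intro hba
        exact hno _ hcl' hba.symm
    have hlam : evalPCL v (lambdaOf p) := by
      refine der_sound hder v ?_
      intro g hg
      rw [Multiset.mem_singleton] at hg
      subst hg
      exact hctx
    have hmem : a ∈ (p.flatMap atomsOfClause).dedup :=
      List.mem_dedup.mpr (List.mem_flatMap.mpr ⟨_, hcl, by simp [atomsOfClause, hy]⟩)
    exact eval_conjAtoms_mem v _ hlam a hmem rfl
  · intro hwa
    have hC := cond_of_wa p hwa
    show Der (conjForms (p.map clauseForm) ::ₘ 0) (lambdaOf p)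
    apply der_unpack
    rw [add_zero]
    unfold lambdaOf
    apply der_conjAtoms_intro
    intro a ha
    obtain ⟨cl, hcl, hmem⟩ := List.mem_flatMap.mp (List.mem_dedup.mp ha)
    have hoff : ∃ cl' ∈ p, CanOffer cl' a := by
      rcases cl with xs | ⟨ys, b⟩
      · exact ⟨_, hcl, hmem⟩
      · rcases List.mem_append.mp hmem with hy | hb
        · exact hC a _ hcl ⟨ys, b, rfl, hy⟩
        · have : a = b := List.mem_singleton.mp hb
          subst this
          exact ⟨_, hcl, rfl⟩
    exact der_atom_core p hC ((p.flatMap atomsOfClause).toFinset \ ∅).card ∅ _ a le_rfl hoff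
      (by simp) le_rfl
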